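/- There exists a finite connected 3-regular simple graph that has no perfect matching (and hence is not isomorphic to a Schreier graph). -/

import Mathlib

def edges : List (Fin 16 × Fin 16) :=
  [(0,2),(0,3),(0,4),(1,2),(1,3),(1,4),(2,3),(4,15),
   (5,7),(5,8),(5,9),(6,7),(6,8),(6,9),(7,8),(9,15),
   (10,12),(10,13),(10,14),(11,12),(11,13),(11,14),(12,13),(14,15)]

def myG : SimpleGraph (Fin 16) where
  Adj a b := (a,b) ∈ edges ∨ (b,a) ∈ edges
  symm := ⟨fun a b h => h.symm⟩
  loopless := ⟨by intro a; exact by revert a; decide⟩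

instance myGDec : DecidableRel myG.Adj :=
  fun a b => inferInstanceAs (Decidable ((a,b) ∈ edges ∨ (b,a) ∈ edges))

lemma myG_reach (v : Fin 16) : myG.Reachable v 15 := by
  have e : ∀ x y : Fin 16, myG.Adj x y → myG.Reachable x y := fun _ _ h => h.reachable
  have r4 : myG.Reachable 4 15 := e _ _ (by decide)
  have r9 : myG.Reachable 9 15 := e _ _ (by decide)
  have r14 : myG.Reachable 14 15 := e _ _ (by decide)
  have r0 : myG.Reachable 0 15 := (e 0 4 (by decide)).trans r4
  have r1 : myG.Reachable 1 15 := (e 1 4 (by decide)).trans r4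
  have r5 : myG.Reachable 5 15 := (e 5 9 (by decide)).trans r9
  have r6 : myG.Reachable 6 15 := (e 6 9 (by decide)).trans r9
  have r10 : myG.Reachable 10 15 := (e 10 14 (by decide)).trans r14
  have r11 : myG.Reachable 11 14 := e _ _ (by decide)
  fin_cases v
  · exact r0
  · exact r1
  · exact (e 2 0 (by decide)).trans r0
  · exact (e 3 0 (by decide)).trans r0
  · exact r4
  · exact r5
  · exact r6
  · exact (e 7 5 (by decide)).trans r5
  · exact (e 8 5 (by decide)).trans r5
  · exact r9
  · exact r10
  · exact r11.trans r14
  · exact ((e 12 10 (by decide)).trans r10)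
  · exact ((e 13 10 (by decide)).trans r10)
  · exact r14
  · exact SimpleGraph.Reachable.refl _

lemma aux (M : myG.Subgraph) (hM : M.IsPerfectMatching) (S : Finset (Fin 16)) (c : Fin 16)
    (hkey : ∀ v ∈ S, ∀ w, myG.Adj v w → w ∈ S ∨ (v = c ∧ w = 15))
    (hc : ¬ M.Adj c 15) (hodd : ¬ Even S.card) : False := by
  classical
  set M' : myG.Subgraph :=
    { verts := ↑S
      Adj := fun a b => M.Adj a b ∧ a ∈ S ∧ b ∈ S
      adj_sub := fun h => M.adj_sub h.1
      edge_vert := fun h => h.2.1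
      symm := ⟨fun a b h => ⟨h.1.symm, h.2.2, h.2.1⟩⟩ } with hM'
  have hmatch : M'.IsMatching := by
    intro v hv
    obtain ⟨w, hw, hwu⟩ := hM.1 (hM.2 v)
    have hvS : v ∈ S := hv
    have hwS : w ∈ S := by
      rcases hkey v hvS w (M.adj_sub hw) with h | ⟨hv', hw'⟩
      · exact h
      · exact absurd (hv' ▸ hw' ▸ hw) hc
    refine ⟨w, ⟨hw, hvS, hwS⟩, ?_⟩
    intro y hy
    exact hwu y hy.1
  have h2 : Even (M'.verts.toFinset.card) := hmatch.even_card
  apply hodd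
  have h3 : M'.verts.toFinset = S := by
    ext x; simp [hM']
  rwa [h3] at h2

theorem exists_cubic_connected_no_perfect_matching :
    ∃ (n : ℕ) (G : SimpleGraph (Fin n)) (_ : DecidableRel G.Adj),
      G.Connected ∧ G.IsRegularOfDegree 3 ∧
      ¬ ∃ M : G.Subgraph, M.IsPerfectMatching := by
  refine ⟨16, myG, myGDec, ?_, ?_, ?_⟩
  · exact ⟨fun u v => (myG_reach u).trans (myG_reach v).symm⟩
  · show ∀ v, myG.degree v = 3
    decide
  · rintro ⟨M, hM⟩
    obtain ⟨p, hp, hpu⟩ := hM.1 (hM.2 15)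
    by_cases h4 : p = 4
    · refine aux M hM {5,6,7,8,9} 9 (by decide) ?_ (by decide)
      intro h
      have : (9 : Fin 16) = p := hpu 9 h.symm
      rw [h4] at this
      exact absurd this (by decide)
    · refine aux M hM {0,1,2,3,4} 4 (by decide) ?_ (by decide)
      intro h
      exact h4 (hpu 4 h.symm).symm
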